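/- Let W be a walk v_0, e_1, v_1, ..., e_r, v_r in a graph G where each edge e of G is assigned a unique time t(e), and suppose W is monotone, i.e., t(e_1) ≤ t(e_2) ≤ ... ≤ t(e_r) when edges are traversed in order. If G is a tree, then W traverses every edge of the unique (v_0, v_r)-path P in G, and the times of the path edges in order along P are non-decreasing. -/
import Mathlib

open SimpleGraph

lemma edges_dropUntil_sublist {V : Type*} {G : SimpleGraph V} [DecidableEq V] {v w : V}
    (p : G.Walk v w) (u : V) (h : u ∈ p.support) :
    (p.dropUntil u h).edges.Sublist p.edges := by
  have hs := congrArg Walk.edges (Walk.take_spec p h)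
  rw [Walk.edges_append] at hs
  exact hs ▸ List.sublist_append_right _ _

lemma edges_bypass_sublist {V : Type*} {G : SimpleGraph V} [DecidableEq V] {u v : V}
    (p : G.Walk u v) : p.bypass.edges.Sublist p.edges := by
  induction p with
  | nil => simp [Walk.bypass]
  | cons ha p ih =>
    simp only [Walk.bypass]
    split_ifs with hs
    · exact ((edges_dropUntil_sublist _ _ hs).trans ih).trans (List.sublist_cons_self _ _)
    · rw [Walk.edges_cons, Walk.edges_cons]; exact ih.cons₂ _

/-- Let `G` be a tree whose edges carry pairwise distinct times `t`, and
let `W` be a monotone walk from `v₀` to `v_r` (the times of its edges, in order, are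
non-decreasing). Then `W` traverses every edge of the unique `(v₀, v_r)`-path `P`, and the
times of the edges of `P`, in order along `P`, are non-decreasing. -/
theorem stmt13 {V : Type*} (G : SimpleGraph V) (hT : G.IsTree)
    (t : Sym2 V → ℕ) (hinj : Set.InjOn t G.edgeSet)
    {u v : V} (W : G.Walk u v)
    (hmono : (W.edges.map t).Chain' (· ≤ ·)) (P : G.Path u v) :
    (∀ e ∈ (P : G.Walk u v).edges, e ∈ W.edges) ∧
      ((P : G.Walk u v).edges.map t).Chain' (· ≤ ·) := by
  classical
  have hP : P = W.toPath := hT.IsAcyclic.path_unique P W.toPath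
  have hsub : (P : G.Walk u v).edges.Sublist W.edges := by
    rw [hP]
    exact edges_bypass_sublist W
  exact ⟨fun e he => hsub.subset he, hmono.sublist (hsub.map t)⟩
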